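/- Let U ⊆ ℝ² ≅ ℂ be open, let ω : U → ℝ be a C³ harmonic function (ω_xx + ω_yy = 0 on U), and let v : U → ℝ be a C³ function satisfying v_xx + v_yy + 2e^{2ω} = 0 on U. Define 𝔮 : U → ℂ by 𝔮 = v_zz − 2ω_z v_z, where v_z = (v_x − i v_y)/2, ω_z = (ω_x − i ω_y)/2, and v_zz = (v_xx − v_yy − 2i v_xy)/4. Then 𝔮 is holomorphic on U, i.e. 𝔮 is complex differentiable at every point of U when (x,y) is identified with z = x + iy. -/

import Mathlib

open Complex Topology Filter

private lemma line_hasDerivAt {F : Type*} [NormedAddCommGroup F] [NormedSpace ℝ F]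
    {f : ℂ → F} {w : ℂ} (hf : DifferentiableAt ℝ f w) (d : ℂ) :
    HasDerivAt (fun t : ℝ => f (w + ↑t * d)) (fderiv ℝ f w d) 0 := by
  have h1 : HasDerivAt (fun t : ℝ => w + (↑t : ℂ) * d) d 0 := by
    simpa using ((Complex.ofRealCLM.hasDerivAt.mul_const d).const_add w)
  have hf' : HasFDerivAt f (fderiv ℝ f w) (w + ((0:ℝ):ℂ) * d) := by
    simpa using hf.hasFDerivAt
  exact hf'.comp_hasDerivAt 0 h1

private lemma deriv_x_eq {F : Type*} [NormedAddCommGroup F] [NormedSpace ℝ F]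
    {f : ℂ → F} {w : ℂ} {c : F} (hf : DifferentiableAt ℝ f w)
    (h : HasDerivAt (fun t : ℝ => f (w + ↑t)) c 0) : c = fderiv ℝ f w 1 :=
  h.unique (by simpa using line_hasDerivAt hf 1)

private lemma deriv_y_eq {F : Type*} [NormedAddCommGroup F] [NormedSpace ℝ F]
    {f : ℂ → F} {w : ℂ} {c : F} (hf : DifferentiableAt ℝ f w)
    (h : HasDerivAt (fun t : ℝ => f (w + ↑t * Complex.I)) c 0) : c = fderiv ℝ f w Complex.I :=
  h.unique (line_hasDerivAt hf Complex.I)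

private lemma cr_differentiableAt {f : ℂ → ℂ} {z : ℂ} {L : ℂ →L[ℝ] ℂ}
    (h : HasFDerivAt f L z) (hCR : L Complex.I = Complex.I * L 1) :
    DifferentiableAt ℂ f z := by
  rw [differentiableAt_iff_restrictScalars ℝ h.differentiableAt]
  refine ⟨(L 1) • ContinuousLinearMap.id ℂ ℂ, ?_⟩
  rw [h.fderiv]
  refine ContinuousLinearMap.ext fun x => ?_
  have hx : x = x.re • (1:ℂ) + x.im • Complex.I := by
    simp [Complex.real_smul, Complex.re_add_im]
  calc ((L 1 • ContinuousLinearMap.id ℂ ℂ).restrictScalars ℝ) x = L 1 * x := by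
        simp [smul_eq_mul, mul_comm]
    _ = L x := by
        have h2 : L x = x.re • L 1 + x.im • L Complex.I := by
          conv_lhs => rw [hx]
          rw [map_add, map_smul, map_smul]
        rw [h2, hCR, Complex.real_smul, Complex.real_smul]
        nth_rewrite 1 [hx]
        rw [Complex.real_smul, Complex.real_smul]
        ring

private lemma second_x {f fx fxx : ℂ → ℝ} {U : Set ℂ} (hU : IsOpen U) {u : ℂ} (hu : u ∈ U)
    (hf1d : DifferentiableAt ℝ (fderiv ℝ f) u)
    (hfx : ∀ y ∈ U, fx y = fderiv ℝ f y 1)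
    (h : HasDerivAt (fun t : ℝ => fx (u + ↑t)) (fxx u) 0) :
    fxx u = fderiv ℝ (fderiv ℝ f) u 1 1 := by
  have hmem : ∀ᶠ t : ℝ in 𝓝 (0:ℝ), u + (↑t:ℂ) ∈ U := by
    have hc : ContinuousAt (fun t : ℝ => u + (↑t : ℂ)) 0 := by fun_prop
    exact hc.preimage_mem_nhds (show U ∈ 𝓝 (u + ((0:ℝ):ℂ)) by simpa using hU.mem_nhds hu)
  have hev : (fun t : ℝ => fderiv ℝ f (u + ↑t) 1) =ᶠ[𝓝 (0:ℝ)] fun t : ℝ => fx (u + ↑t) := by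
    filter_upwards [hmem] with t ht using (hfx _ ht).symm
  have h2 : HasDerivAt (fun t : ℝ => fderiv ℝ f (u + ↑t) 1) (fxx u) 0 :=
    h.congr_of_eventuallyEq hev
  have h3 : HasDerivAt (fun t : ℝ => fderiv ℝ f (u + ↑t) 1) (fderiv ℝ (fderiv ℝ f) u 1 1) 0 := by
    have h4 := (line_hasDerivAt hf1d 1).clm_apply (hasDerivAt_const (0:ℝ) (1:ℂ))
    simpa using h4
  exact h2.unique h3

private lemma second_y {f fe fey : ℂ → ℝ} {U : Set ℂ} (hU : IsOpen U) {u : ℂ} (hu : u ∈ U)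
    (hf1d : DifferentiableAt ℝ (fderiv ℝ f) u) (e : ℂ)
    (hfe : ∀ y ∈ U, fe y = fderiv ℝ f y e)
    (h : HasDerivAt (fun t : ℝ => fe (u + ↑t * Complex.I)) (fey u) 0) :
    fey u = fderiv ℝ (fderiv ℝ f) u Complex.I e := by
  have hmem : ∀ᶠ t : ℝ in 𝓝 (0:ℝ), u + (↑t:ℂ) * Complex.I ∈ U := by
    have hc : ContinuousAt (fun t : ℝ => u + (↑t : ℂ) * Complex.I) 0 := by fun_prop
    exact hc.preimage_mem_nhds
      (show U ∈ 𝓝 (u + ((0:ℝ):ℂ) * Complex.I) by simpa using hU.mem_nhds hu)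
  have hev : (fun t : ℝ => fderiv ℝ f (u + ↑t * Complex.I) e)
      =ᶠ[𝓝 (0:ℝ)] fun t : ℝ => fe (u + ↑t * Complex.I) := by
    filter_upwards [hmem] with t ht using (hfe _ ht).symm
  have h2 : HasDerivAt (fun t : ℝ => fderiv ℝ f (u + ↑t * Complex.I) e) (fey u) 0 :=
    h.congr_of_eventuallyEq hev
  have h3 : HasDerivAt (fun t : ℝ => fderiv ℝ f (u + ↑t * Complex.I) e)
      (fderiv ℝ (fderiv ℝ f) u Complex.I e) 0 := by
    have h4 := (line_hasDerivAt hf1d Complex.I).clm_apply (hasDerivAt_const (0:ℝ) e)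
    simpa using h4
  exact h2.unique h3

set_option maxHeartbeats 1000000 in
/-- The Hopf differential `𝔮 = v_zz − 2ω_z v_z` of a solution of the conformally
transformed torsion equation `Δv + 2e^{2ω} = 0`, with `ω` harmonic, is holomorphic. -/
theorem hopf_differential_holomorphic
    (U : Set ℂ) (hU : IsOpen U)
    (ω v : ℂ → ℝ)
    (hω : ContDiffOn ℝ 3 ω U) (hv : ContDiffOn ℝ 3 v U)
    (ωx ωy ωxx ωyy vx vy vxx vyy vxy : ℂ → ℝ)
    (hωx : ∀ z ∈ U, HasDerivAt (fun t : ℝ => ω (z + t)) (ωx z) 0)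
    (hωy : ∀ z ∈ U, HasDerivAt (fun t : ℝ => ω (z + t * Complex.I)) (ωy z) 0)
    (hωxx : ∀ z ∈ U, HasDerivAt (fun t : ℝ => ωx (z + t)) (ωxx z) 0)
    (hωyy : ∀ z ∈ U, HasDerivAt (fun t : ℝ => ωy (z + t * Complex.I)) (ωyy z) 0)
    (hvx : ∀ z ∈ U, HasDerivAt (fun t : ℝ => v (z + t)) (vx z) 0)
    (hvy : ∀ z ∈ U, HasDerivAt (fun t : ℝ => v (z + t * Complex.I)) (vy z) 0)
    (hvxx : ∀ z ∈ U, HasDerivAt (fun t : ℝ => vx (z + t)) (vxx z) 0)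
    (hvyy : ∀ z ∈ U, HasDerivAt (fun t : ℝ => vy (z + t * Complex.I)) (vyy z) 0)
    (hvxy : ∀ z ∈ U, HasDerivAt (fun t : ℝ => vx (z + t * Complex.I)) (vxy z) 0)
    (hharm : ∀ z ∈ U, ωxx z + ωyy z = 0)
    (hpde : ∀ z ∈ U, vxx z + vyy z + 2 * Real.exp (2 * ω z) = 0) :
    ∀ z ∈ U, DifferentiableAt ℂ
      (fun w => ((vxx w : ℂ) - (vyy w : ℂ) - 2 * Complex.I * (vxy w : ℂ)) / 4
        - 2 * (((ωx w : ℂ) - Complex.I * (ωy w : ℂ)) / 2)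
            * (((vx w : ℂ) - Complex.I * (vy w : ℂ)) / 2)) z := by
  intro z hz
  have hUz : U ∈ 𝓝 z := hU.mem_nhds hz
  have hvdiff : ∀ u ∈ U, DifferentiableAt ℝ v u := fun u hu =>
    (hv.contDiffAt (hU.mem_nhds hu)).differentiableAt (by norm_num)
  have hωdiff : ∀ u ∈ U, DifferentiableAt ℝ ω u := fun u hu =>
    (hω.contDiffAt (hU.mem_nhds hu)).differentiableAt (by norm_num)
  have hF1 : ContDiffOn ℝ 2 (fun y => fderiv ℝ v y) U := hv.fderiv_of_isOpen hU (by norm_num)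
  have hG1 : ContDiffOn ℝ 2 (fun y => fderiv ℝ ω y) U := hω.fderiv_of_isOpen hU (by norm_num)
  have hF1diff : ∀ u ∈ U, DifferentiableAt ℝ (fderiv ℝ v) u := fun u hu =>
    (hF1.contDiffAt (hU.mem_nhds hu)).differentiableAt (by norm_num)
  have hG1diff : ∀ u ∈ U, DifferentiableAt ℝ (fderiv ℝ ω) u := fun u hu =>
    (hG1.contDiffAt (hU.mem_nhds hu)).differentiableAt (by norm_num)
  have hF2 : ContDiffOn ℝ 1 (fun y => fderiv ℝ (fderiv ℝ v) y) U :=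
    hF1.fderiv_of_isOpen hU (by norm_num)
  have hF2diff : ∀ u ∈ U, DifferentiableAt ℝ (fderiv ℝ (fderiv ℝ v)) u := fun u hu =>
    (hF2.contDiffAt (hU.mem_nhds hu)).differentiableAt (by norm_num)
  -- first order identifications
  have hvx1 : ∀ u ∈ U, vx u = fderiv ℝ v u 1 := fun u hu => deriv_x_eq (hvdiff u hu) (hvx u hu)
  have hvyI : ∀ u ∈ U, vy u = fderiv ℝ v u Complex.I := fun u hu =>
    deriv_y_eq (hvdiff u hu) (hvy u hu)
  have hωx1 : ∀ u ∈ U, ωx u = fderiv ℝ ω u 1 := fun u hu => deriv_x_eq (hωdiff u hu) (hωx u hu)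
  have hωyI : ∀ u ∈ U, ωy u = fderiv ℝ ω u Complex.I := fun u hu =>
    deriv_y_eq (hωdiff u hu) (hωy u hu)
  -- second order identifications
  have hvxx2 : ∀ u ∈ U, vxx u = fderiv ℝ (fderiv ℝ v) u 1 1 := fun u hu =>
    second_x hU hu (hF1diff u hu) hvx1 (hvxx u hu)
  have hvxy2 : ∀ u ∈ U, vxy u = fderiv ℝ (fderiv ℝ v) u Complex.I 1 := fun u hu =>
    second_y hU hu (hF1diff u hu) 1 hvx1 (hvxy u hu)
  have hvyy2 : ∀ u ∈ U, vyy u = fderiv ℝ (fderiv ℝ v) u Complex.I Complex.I := fun u hu =>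
    second_y hU hu (hF1diff u hu) Complex.I hvyI (hvyy u hu)
  have hωxx2 : ωxx z = fderiv ℝ (fderiv ℝ ω) z 1 1 :=
    second_x hU hz (hG1diff z hz) hωx1 (hωxx z hz)
  have hωyy2 : ωyy z = fderiv ℝ (fderiv ℝ ω) z Complex.I Complex.I :=
    second_y hU hz (hG1diff z hz) Complex.I hωyI (hωyy z hz)
  -- PDE in terms of fderiv
  have hpde2 : ∀ u ∈ U, fderiv ℝ (fderiv ℝ v) u 1 1
      + fderiv ℝ (fderiv ℝ v) u Complex.I Complex.I + 2 * Real.exp (2 * ω u) = 0 := fun u hu => by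
    rw [← hvxx2 u hu, ← hvyy2 u hu]; exact hpde u hu
  -- derivative machines at z
  have hF2z : HasFDerivAt (fderiv ℝ (fderiv ℝ v)) (fderiv ℝ (fderiv ℝ (fderiv ℝ v)) z) z :=
    (hF2diff z hz).hasFDerivAt
  have happ : ∀ e c : ℂ, HasFDerivAt (fun u => fderiv ℝ (fderiv ℝ v) u e c)
      (((ContinuousLinearMap.apply ℝ ℝ c).comp
          (ContinuousLinearMap.apply ℝ (ℂ →L[ℝ] ℝ) e)).comp
        (fderiv ℝ (fderiv ℝ (fderiv ℝ v)) z)) z := fun e c => by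
    have h := (hF2z.clm_apply (hasFDerivAt_const e z)).clm_apply (hasFDerivAt_const c z)
    refine h.congr_fderiv ?_
    ext d
    simp
  have happ1 : ∀ e : ℂ, HasFDerivAt (fun u => fderiv ℝ v u e)
      ((ContinuousLinearMap.apply ℝ ℝ e).comp (fderiv ℝ (fderiv ℝ v) z)) z := fun e => by
    have h := ((ContinuousLinearMap.apply ℝ ℝ e).hasFDerivAt).comp z
      (hF1diff z hz).hasFDerivAt
    simpa [Function.comp_def, ContinuousLinearMap.apply_apply] using h
  have happω : ∀ e : ℂ, HasFDerivAt (fun u => fderiv ℝ ω u e)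
      ((ContinuousLinearMap.apply ℝ ℝ e).comp (fderiv ℝ (fderiv ℝ ω) z)) z := fun e => by
    have h := ((ContinuousLinearMap.apply ℝ ℝ e).hasFDerivAt).comp z
      (hG1diff z hz).hasFDerivAt
    simpa [Function.comp_def, ContinuousLinearMap.apply_apply] using h
  -- differentiated PDE
  have hexp : HasFDerivAt (fun u => 2 * Real.exp (2 * ω u))
      ((2:ℝ) • (Real.exp (2 * ω z) • ((2:ℝ) • fderiv ℝ ω z))) z := by
    have h1 : HasFDerivAt (fun u => 2 * ω u) ((2:ℝ) • fderiv ℝ ω z) z :=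
      (hωdiff z hz).hasFDerivAt.const_mul 2
    exact ((Real.hasDerivAt_exp (2 * ω z)).comp_hasFDerivAt z h1).const_mul 2
  have hpdeD : ∀ d : ℂ, fderiv ℝ (fderiv ℝ (fderiv ℝ v)) z d 1 1
      + fderiv ℝ (fderiv ℝ (fderiv ℝ v)) z d Complex.I Complex.I
      + 4 * Real.exp (2 * ω z) * fderiv ℝ ω z d = 0 := by
    intro d
    have hsum := ((happ 1 1).add (happ Complex.I Complex.I)).add hexp
    have hev : (fun u => fderiv ℝ (fderiv ℝ v) u 1 1
        + fderiv ℝ (fderiv ℝ v) u Complex.I Complex.I + 2 * Real.exp (2 * ω u))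
        =ᶠ[𝓝 z] fun _ => (0:ℝ) := by
      filter_upwards [hUz] with u hu using hpde2 u hu
    have h0 : fderiv ℝ (fun u => fderiv ℝ (fderiv ℝ v) u 1 1
        + fderiv ℝ (fderiv ℝ v) u Complex.I Complex.I + 2 * Real.exp (2 * ω u)) z = 0 := by
      rw [hev.fderiv_eq]; exact fderiv_const_apply 0
    replace h0 := hsum.fderiv.symm.trans h0
    have h5 := congrArg (fun (L : ℂ →L[ℝ] ℝ) => L d) h0
    simp only [ContinuousLinearMap.add_apply, ContinuousLinearMap.comp_apply,
      ContinuousLinearMap.apply_apply, ContinuousLinearMap.smul_apply,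
      ContinuousLinearMap.zero_apply, smul_eq_mul] at h5
    linarith [h5]
  -- symmetries
  have hFsymm : ∀ u ∈ U, ∀ a b : ℂ,
      fderiv ℝ (fderiv ℝ v) u a b = fderiv ℝ (fderiv ℝ v) u b a := by
    intro u hu a b
    refine second_derivative_symmetric_of_eventually (f := v) ?_ (hF1diff u hu).hasFDerivAt a b
    filter_upwards [hU.mem_nhds hu] with y hy using (hvdiff y hy).hasFDerivAt
  have hGsymm : fderiv ℝ (fderiv ℝ ω) z 1 Complex.I = fderiv ℝ (fderiv ℝ ω) z Complex.I 1 := by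
    refine second_derivative_symmetric_of_eventually (f := ω) ?_ (hG1diff z hz).hasFDerivAt 1 Complex.I
    filter_upwards [hUz] with y hy using (hωdiff y hy).hasFDerivAt
  have hT12 : ∀ a b : ℂ, fderiv ℝ (fderiv ℝ (fderiv ℝ v)) z a b
      = fderiv ℝ (fderiv ℝ (fderiv ℝ v)) z b a := by
    intro a b
    refine second_derivative_symmetric_of_eventually (f := fderiv ℝ v) ?_ hF2z a b
    filter_upwards [hUz] with y hy using (hF1diff y hy).hasFDerivAt
  have hT23 : ∀ d a b : ℂ, fderiv ℝ (fderiv ℝ (fderiv ℝ v)) z d a b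
      = fderiv ℝ (fderiv ℝ (fderiv ℝ v)) z d b a := by
    intro d a b
    have hev : (fun u => fderiv ℝ (fderiv ℝ v) u a b)
        =ᶠ[𝓝 z] (fun u => fderiv ℝ (fderiv ℝ v) u b a) := by
      filter_upwards [hUz] with u hu using hFsymm u hu a b
    have h1 := hev.fderiv_eq (𝕜 := ℝ)
    rw [(happ a b).fderiv, (happ b a).fderiv] at h1
    have h5 := congrArg (fun (L : ℂ →L[ℝ] ℝ) => L d) h1
    simpa using h5
  -- rewrite the goal
  have hevQ : (fun w => ((vxx w : ℂ) - (vyy w : ℂ) - 2 * Complex.I * (vxy w : ℂ)) / 4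
        - 2 * (((ωx w : ℂ) - Complex.I * (ωy w : ℂ)) / 2)
            * (((vx w : ℂ) - Complex.I * (vy w : ℂ)) / 2))
      =ᶠ[𝓝 z] (fun w => (4⁻¹:ℂ) * (↑(fderiv ℝ (fderiv ℝ v) w 1 1)
            - ↑(fderiv ℝ (fderiv ℝ v) w Complex.I Complex.I)
            - 2 * Complex.I * ↑(fderiv ℝ (fderiv ℝ v) w Complex.I 1))
        - (2⁻¹:ℂ) * ((↑(fderiv ℝ ω w 1) - Complex.I * ↑(fderiv ℝ ω w Complex.I))
            * (↑(fderiv ℝ v w 1) - Complex.I * ↑(fderiv ℝ v w Complex.I)))) := by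
    filter_upwards [hUz] with u hu
    rw [hvxx2 u hu, hvyy2 u hu, hvxy2 u hu, hωx1 u hu, hωyI u hu, hvx1 u hu, hvyI u hu]
    ring
  rw [hevQ.differentiableAt_iff]
  -- build the total derivative
  have c11 := Complex.ofRealCLM.hasFDerivAt.comp z (happ 1 1)
  have cII := Complex.ofRealCLM.hasFDerivAt.comp z (happ Complex.I Complex.I)
  have cI1 := Complex.ofRealCLM.hasFDerivAt.comp z (happ Complex.I 1)
  have cw1 := Complex.ofRealCLM.hasFDerivAt.comp z (happω 1)
  have cwI := Complex.ofRealCLM.hasFDerivAt.comp z (happω Complex.I)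
  have cv1 := Complex.ofRealCLM.hasFDerivAt.comp z (happ1 1)
  have cvI := Complex.ofRealCLM.hasFDerivAt.comp z (happ1 Complex.I)
  have hQ := (((c11.sub cII).sub (cI1.const_mul (2 * Complex.I))).const_mul (4⁻¹:ℂ)).sub
      (((cw1.sub (cwI.const_mul Complex.I)).mul
        (cv1.sub (cvI.const_mul Complex.I))).const_mul (2⁻¹:ℂ))
  refine cr_differentiableAt hQ ?_
  -- now the Cauchy–Riemann computation
  simp only [ContinuousLinearMap.coe_comp', Function.comp_apply, ContinuousLinearMap.add_apply,
    ContinuousLinearMap.sub_apply, ContinuousLinearMap.smul_apply, ContinuousLinearMap.comp_apply,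
    ContinuousLinearMap.apply_apply, Complex.ofRealCLM_apply, smul_eq_mul,
    Pi.sub_apply, Pi.mul_apply, Pi.add_apply]
  have e1 := hT23 1 Complex.I 1
  have e2 : fderiv ℝ (fderiv ℝ (fderiv ℝ v)) z Complex.I 1 1
      = fderiv ℝ (fderiv ℝ (fderiv ℝ v)) z 1 1 Complex.I :=
    (congrArg (fun L : ℂ →L[ℝ] ℝ => L 1) (hT12 Complex.I 1)).trans e1
  have e3 : fderiv ℝ (fderiv ℝ (fderiv ℝ v)) z Complex.I Complex.I 1
      = fderiv ℝ (fderiv ℝ (fderiv ℝ v)) z 1 Complex.I Complex.I :=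
    (hT23 Complex.I Complex.I 1).trans
      (congrArg (fun L : ℂ →L[ℝ] ℝ => L Complex.I) (hT12 Complex.I 1))
  have e4 : fderiv ℝ (fderiv ℝ (fderiv ℝ v)) z 1 Complex.I Complex.I
      = -(4 * Real.exp (2 * ω z) * fderiv ℝ ω z 1)
        - fderiv ℝ (fderiv ℝ (fderiv ℝ v)) z 1 1 1 := by linarith [hpdeD 1]
  have e5 : fderiv ℝ (fderiv ℝ (fderiv ℝ v)) z Complex.I Complex.I Complex.I
      = -(4 * Real.exp (2 * ω z) * fderiv ℝ ω z Complex.I)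
        - fderiv ℝ (fderiv ℝ (fderiv ℝ v)) z 1 1 Complex.I := by
    linarith [hpdeD Complex.I, e2]
  have e6 := hFsymm z hz Complex.I 1
  have e7 : fderiv ℝ (fderiv ℝ v) z Complex.I Complex.I
      = -(2 * Real.exp (2 * ω z)) - fderiv ℝ (fderiv ℝ v) z 1 1 := by
    linarith [hpde2 z hz]
  have e8 := hGsymm.symm
  have e9 : fderiv ℝ (fderiv ℝ ω) z Complex.I Complex.I = -(fderiv ℝ (fderiv ℝ ω) z 1 1) := by
    have h9 := hharm z hz
    rw [hωxx2, hωyy2] at h9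
    linarith
  rw [e1, e2, e3, e4, e5, e6, e7, e8, e9]
  have hI3 : (Complex.I : ℂ) ^ 3 = -Complex.I := by
    rw [pow_succ, Complex.I_sq]; ring
  push_cast
  ring_nf
  simp only [Complex.I_sq, hI3]
  ring
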